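/- Exchange at the tree level: Let H be a binomial arborescence containing vertices u, v, w where u is the parent of both v and w, α_H(w) < α_H(v), and let T_w be the subtree rooted at w and T_0, ..., T_ℓ the subtrees rooted at the children of v of heights α_H(w), ..., α_H(v)-1 respectively. Then (ignoring which player beats which) the trees T_w, T_0, ..., T_ℓ can be combined by adding ℓ+1 arcs among their roots into a single binomial arborescence of height α_H(v), and detaching T_0,...,T_ℓ from v leaves v rooting a binomial arborescence of height α_H(w). -/

import Mathlib

universe u

variable {V : Type*} [DecidableEq V]

/-- A binomial arborescence over relation `A`, recorded with its vertex set,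
its arc set, its root and its height. -/
inductive IsBAE (A : V → V → Prop) : Finset V → Finset (V × V) → V → ℕ → Prop
  | single (a : V) : IsBAE A {a} ∅ a 0
  | join {s t : Finset V} {E F : Finset (V × V)} {a b : V} {i : ℕ} :
      IsBAE A s E a i → IsBAE A t F b i → Disjoint s t → A a b →
      IsBAE A (s ∪ t) (insert (a, b) (E ∪ F)) a (i + 1)

/-- Classical filter on a finset (no decidability assumptions needed). -/
noncomputable def cfilter {α : Type*} (p : α → Prop) (s : Finset α) : Finset α :=
  @Finset.filter _ p (fun _ => Classical.dec _) s

/-- The descendants (inside ambient vertex set `s`) of `x` in the digraph with arc set `E`: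
vertices reachable from `x`, including `x` itself (when `x ∈ s`). -/
noncomputable def desc (s : Finset V) (E : Finset (V × V)) (x : V) : Finset V :=
  cfilter (fun y => Relation.ReflTransGen (fun a b => (a, b) ∈ E) x y) s

/-- The height `α_H(x)` of a vertex: log base 2 of its number of descendants. -/
noncomputable def hgt (s : Finset V) (E : Finset (V × V)) (x : V) : ℕ :=
  Nat.log 2 (desc s E x).card

/-- The arcs of `E` lying within the subtree of descendants of `x`. -/
noncomputable def subArcs (s : Finset V) (E : Finset (V × V)) (x : V) : Finset (V × V) :=
  cfilter (fun e => e.1 ∈ desc s E x ∧ e.2 ∈ desc s E x) E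

set_option linter.unusedSectionVars false
set_option linter.unusedVariables false
section Basics

variable {A : V → V → Prop} {s t : Finset V} {E F : Finset (V × V)} {a b x y z : V} {n : ℕ}

lemma mem_cfilter {α : Type*} {p : α → Prop} {s : Finset α} {x : α} :
    x ∈ cfilter p s ↔ x ∈ s ∧ p x := by
  simp [cfilter, Finset.mem_filter]

lemma mem_desc : y ∈ desc s E x ↔ y ∈ s ∧ Relation.ReflTransGen (fun a b => (a, b) ∈ E) x y := by
  simp [desc, mem_cfilter]

lemma desc_subset : desc s E x ⊆ s := fun y hy => (mem_desc.1 hy).1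

lemma self_mem_desc (hx : x ∈ s) : x ∈ desc s E x :=
  mem_desc.2 ⟨hx, Relation.ReflTransGen.refl⟩

lemma IsBAE.root_mem' (h : IsBAE A s E a n) : a ∈ s := by
  induction h with
  | single => simp
  | join h1 _ _ _ ih1 _ => exact Finset.mem_union_left _ ih1

/-- Edges lie within the vertex set. -/
lemma IsBAE.edge_mem (h : IsBAE A s E a n) : ∀ e ∈ E, e.1 ∈ s ∧ e.2 ∈ s := by
  induction h with
  | single => simp
  | join h1 h2 hd hA ih1 ih2 =>
    rintro ⟨p, q⟩ hpq
    rcases Finset.mem_insert.1 hpq with he | he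
    · rw [Prod.mk.injEq] at he
      rw [he.1, he.2]
      exact ⟨Finset.mem_union_left _ h1.root_mem', Finset.mem_union_right _ h2.root_mem'⟩
    · rcases Finset.mem_union.1 he with he | he
      · exact ⟨Finset.mem_union_left _ (ih1 _ he).1, Finset.mem_union_left _ (ih1 _ he).2⟩
      · exact ⟨Finset.mem_union_right _ (ih2 _ he).1, Finset.mem_union_right _ (ih2 _ he).2⟩

lemma IsBAE.card_eq (h : IsBAE A s E a n) : s.card = 2 ^ n := by
  induction h with
  | single => simp
  | join h1 h2 hd hA ih1 ih2 =>
    rw [Finset.card_union_of_disjoint hd, ih1, ih2, pow_succ]; ring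

/-- The root has no incoming arc. -/
lemma IsBAE.no_incoming (h : IsBAE A s E a n) : ∀ x, (x, a) ∉ E := by
  induction h with
  | single => simp
  | join h1 h2 hd hA ih1 ih2 =>
    intro x hx
    rcases Finset.mem_insert.1 hx with he | he
    · rw [Prod.mk.injEq] at he
      exact Finset.disjoint_left.1 hd h1.root_mem' (he.2 ▸ h2.root_mem')
    · rcases Finset.mem_union.1 he with he | he
      · exact ih1 _ he
      · exact Finset.disjoint_left.1 hd h1.root_mem' ((h2.edge_mem _ he).2)

/-- If `A ≤ B` then `IsBAE A → IsBAE B`. -/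
lemma IsBAE.mono {B : V → V → Prop} (hAB : ∀ x y, A x y → B x y)
    (h : IsBAE A s E a n) : IsBAE B s E a n := by
  induction h with
  | single a => exact IsBAE.single a
  | join h1 h2 hd hA ih1 ih2 => exact IsBAE.join ih1 ih2 hd (hAB _ _ hA)

lemma desc_closed (hE : ∀ e ∈ E, e.2 ∈ s) (hy : y ∈ desc s E x) (hyz : (y, z) ∈ E) :
    z ∈ desc s E x :=
  mem_desc.2 ⟨hE _ hyz, (mem_desc.1 hy).2.tail hyz⟩

lemma desc_trans (hy : y ∈ desc s E x) : desc s E y ⊆ desc s E x := by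
  intro z hz
  rcases mem_desc.1 hz with ⟨hzs, hp⟩
  exact mem_desc.2 ⟨hzs, (mem_desc.1 hy).2.trans hp⟩

/-- One cannot reach the root from elsewhere. -/
lemma not_root_mem_desc (h : IsBAE A s E a n) (hx : x ≠ a) : a ∉ desc s E x := by
  intro ha
  rcases (mem_desc.1 ha).2.cases_tail with rfl | ⟨c, _, hc⟩
  · exact hx rfl
  · exact h.no_incoming c hc

end Basics
section Stab

variable {A : V → V → Prop} {s t : Finset V} {E F : Finset (V × V)} {a b x y z : V} {i n : ℕ}

/-- Stability of descendants for a vertex of the left tree (other than the root)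
under a join. -/
lemma desc_left (h1 : IsBAE A s E a i) (h2 : IsBAE A t F b i) (hd : Disjoint s t)
    (hx : x ∈ s) (hxa : x ≠ a) :
    desc (s ∪ t) (insert (a, b) (E ∪ F)) x = desc s E x := by
  ext y
  constructor
  · intro hy
    have hp := (mem_desc.1 hy).2
    clear hy
    induction hp with
    | refl => exact self_mem_desc hx
    | tail hp hstep ih =>
      rename_i c d
      rcases Finset.mem_insert.1 hstep with he | he
      · rw [Prod.mk.injEq] at he
        exact absurd (he.1 ▸ ih) (not_root_mem_desc h1 hxa)
      · rcases Finset.mem_union.1 he with he | he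
        · exact desc_closed (fun e hee => (h1.edge_mem e hee).2) ih he
        · exact absurd (desc_subset ih) (Finset.disjoint_left.1 hd · ((h2.edge_mem _ he).1))
  · intro hy
    rcases mem_desc.1 hy with ⟨hys, hp⟩
    exact mem_desc.2 ⟨Finset.mem_union_left _ hys,
      Relation.ReflTransGen.mono (fun p q hpq => Finset.mem_insert_of_mem (Finset.mem_union_left _ hpq)) _ _ hp⟩

/-- Stability of descendants for a vertex of the right tree under a join. -/
lemma desc_right (h1 : IsBAE A s E a i) (h2 : IsBAE A t F b i) (hd : Disjoint s t)
    (hx : x ∈ t) :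
    desc (s ∪ t) (insert (a, b) (E ∪ F)) x = desc t F x := by
  ext y
  constructor
  · intro hy
    have hp := (mem_desc.1 hy).2
    clear hy
    induction hp with
    | refl => exact self_mem_desc hx
    | tail hp hstep ih =>
      rename_i c d
      rcases Finset.mem_insert.1 hstep with he | he
      · rw [Prod.mk.injEq] at he
        exact absurd (desc_subset (he.1 ▸ ih)) (Finset.disjoint_left.1 hd h1.root_mem')
      · rcases Finset.mem_union.1 he with he | he
        · exact absurd (desc_subset ih) (fun hmem =>
            Finset.disjoint_left.1 hd ((h1.edge_mem _ he).1) hmem)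
        · exact desc_closed (fun e hee => (h2.edge_mem e hee).2) ih he
  · intro hy
    rcases mem_desc.1 hy with ⟨hys, hp⟩
    exact mem_desc.2 ⟨Finset.mem_union_right _ hys,
      Relation.ReflTransGen.mono (fun p q hpq => Finset.mem_insert_of_mem (Finset.mem_union_right _ hpq)) _ _ hp⟩

/-- Every vertex is a descendant of the root. -/
lemma IsBAE.desc_root (h : IsBAE A s E a n) : desc s E a = s := by
  induction h with
  | single a =>
    apply Finset.Subset.antisymm desc_subset
    intro y hy
    rw [Finset.mem_singleton] at hy
    subst hy
    exact self_mem_desc (Finset.mem_singleton_self y)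
  | join h1 h2 hd hA ih1 ih2 =>
    rename_i s t E F a b i
    apply Finset.Subset.antisymm desc_subset
    intro y hy
    rcases Finset.mem_union.1 hy with hy | hy
    · have h' : y ∈ desc s E a := by rw [ih1]; exact hy
      rcases mem_desc.1 h' with ⟨_, hp⟩
      exact mem_desc.2 ⟨Finset.mem_union_left _ hy,
        Relation.ReflTransGen.mono (fun p q hpq => Finset.mem_insert_of_mem (Finset.mem_union_left _ hpq)) _ _ hp⟩
    · have h' : y ∈ desc t F b := by rw [ih2]; exact hy
      rcases mem_desc.1 h' with ⟨_, hp⟩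
      refine mem_desc.2 ⟨Finset.mem_union_right _ hy, Relation.ReflTransGen.trans
        (Relation.ReflTransGen.single (Finset.mem_insert_self _ _)) ?_⟩
      exact Relation.ReflTransGen.mono (fun p q hpq => Finset.mem_insert_of_mem (Finset.mem_union_right _ hpq)) _ _ hp

lemma IsBAE.hgt_root (h : IsBAE A s E a n) : hgt s E a = n := by
  rw [hgt, h.desc_root, h.card_eq, Nat.log_pow (by norm_num)]

end Stab
section Sub

variable {A : V → V → Prop} {s t : Finset V} {E F : Finset (V × V)} {a b x y z : V} {i n : ℕ}

/-- Arc filter for a subtree (same as `subArcs`, unfolded form). -/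
lemma mem_subArcs {e : V × V} :
    e ∈ subArcs s E x ↔ e ∈ E ∧ e.1 ∈ desc s E x ∧ e.2 ∈ desc s E x := by
  simp [subArcs, mem_cfilter]

/-- Descendant computation relativizes to subtrees. -/
lemma desc_sub (hE : ∀ e ∈ E, e.2 ∈ s) (hb : b ∈ desc s E x) :
    desc (desc s E x) (subArcs s E x) b = desc s E b := by
  ext y
  constructor
  · intro hy
    rcases mem_desc.1 hy with ⟨hys, hp⟩
    refine mem_desc.2 ⟨desc_subset hys, ?_⟩
    exact Relation.ReflTransGen.mono (fun p q hpq => (mem_subArcs.1 hpq).1) _ _ hp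
  · intro hy
    have hp := (mem_desc.1 hy).2
    clear hy
    induction hp with
    | refl => exact self_mem_desc hb
    | tail hp hstep ih =>
      rename_i c d
      have hc : c ∈ desc s E x := desc_subset ih
      have hd : d ∈ desc s E x := desc_closed hE hc hstep
      exact mem_desc.2 ⟨hd, (mem_desc.1 ih).2.tail (mem_subArcs.2 ⟨hstep, hc, hd⟩)⟩

lemma hgt_sub (hE : ∀ e ∈ E, e.2 ∈ s) (hb : b ∈ desc s E x) :
    hgt (desc s E x) (subArcs s E x) b = hgt s E b := by
  rw [hgt, hgt, desc_sub hE hb]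

/-- Every subtree of a binomial arborescence is a binomial arborescence (over the
trivial relation) of height given by `hgt`. -/
lemma IsBAE.subtree (h : IsBAE A s E a n) :
    ∀ x ∈ s, IsBAE (fun _ _ => True) (desc s E x) (subArcs s E x) x (hgt s E x) := by
  induction h with
  | single a =>
    intro x hx
    rw [Finset.mem_singleton] at hx
    subst hx
    have h0 : IsBAE (fun _ _ : V => True) {x} ∅ x 0 := IsBAE.single x
    have hd : desc {x} (∅ : Finset (V × V)) x = {x} := h0.desc_root
    have hh : hgt {x} (∅ : Finset (V × V)) x = 0 := h0.hgt_root
    rw [hd, hh]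
    have : subArcs {x} (∅ : Finset (V × V)) x = ∅ := by simp [subArcs, cfilter]
    rw [this]
    exact IsBAE.single x
  | join h1 h2 hd hA ih1 ih2 =>
    rename_i s t E F a b i
    intro x hx
    have hjoin : IsBAE A (s ∪ t) (insert (a, b) (E ∪ F)) a (i + 1) :=
      IsBAE.join h1 h2 hd hA
    by_cases hxa : x = a
    · subst hxa
      rw [hjoin.desc_root, hjoin.hgt_root]
      have harcs : subArcs (s ∪ t) (insert (x, b) (E ∪ F)) x = insert (x, b) (E ∪ F) := by
        apply Finset.Subset.antisymm (fun e he => (mem_subArcs.1 he).1)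
        intro e he
        refine mem_subArcs.2 ⟨he, ?_, ?_⟩ <;>
          rw [hjoin.desc_root] <;> [exact (hjoin.edge_mem e he).1; exact (hjoin.edge_mem e he).2]
      rw [harcs]
      exact hjoin.mono (fun _ _ _ => trivial)
    · rcases Finset.mem_union.1 hx with hxs | hxt
      · have hdesc := desc_left h1 h2 hd hxs hxa
        have harcs : subArcs (s ∪ t) (insert (a, b) (E ∪ F)) x = subArcs s E x := by
          ext e
          rw [mem_subArcs, mem_subArcs, hdesc]
          constructor
          · rintro ⟨he, h1', h2'⟩
            rcases Finset.mem_insert.1 he with he | he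
            · subst he
              exact absurd h1' (not_root_mem_desc h1 hxa)
            · rcases Finset.mem_union.1 he with he | he
              · exact ⟨he, h1', h2'⟩
              · exact absurd (desc_subset h1')
                  (fun hm => Finset.disjoint_left.1 hd hm ((h2.edge_mem _ he).1))
          · rintro ⟨he, h1', h2'⟩
            exact ⟨Finset.mem_insert_of_mem (Finset.mem_union_left _ he), h1', h2'⟩
        have hh : hgt (s ∪ t) (insert (a, b) (E ∪ F)) x = hgt s E x := by
          rw [hgt, hgt, hdesc]
        rw [hdesc, harcs, hh]
        exact ih1 x hxs
      · have hdesc := desc_right h1 h2 hd hxt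
        have harcs : subArcs (s ∪ t) (insert (a, b) (E ∪ F)) x = subArcs t F x := by
          ext e
          rw [mem_subArcs, mem_subArcs, hdesc]
          constructor
          · rintro ⟨he, h1', h2'⟩
            rcases Finset.mem_insert.1 he with he | he
            · subst he
              exact absurd (desc_subset h1')
                (fun hm => Finset.disjoint_left.1 hd h1.root_mem' hm)
            · rcases Finset.mem_union.1 he with he | he
              · exact absurd (desc_subset h1')
                  (fun hm => Finset.disjoint_left.1 hd ((h1.edge_mem _ he).1) hm)
              · exact ⟨he, h1', h2'⟩
          · rintro ⟨he, h1', h2'⟩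
            exact ⟨Finset.mem_insert_of_mem (Finset.mem_union_right _ he), h1', h2'⟩
        have hh : hgt (s ∪ t) (insert (a, b) (E ∪ F)) x = hgt t F x := by
          rw [hgt, hgt, hdesc]
        rw [hdesc, harcs, hh]
        exact ih2 x hxt

end Sub
section Children

variable {A : V → V → Prop} {s t : Finset V} {E F : Finset (V × V)} {a b x y z : V} {i n : ℕ}

/-- The root of a binomial arborescence of height `n` has exactly one child of each
height `0, …, n-1`, and their subtrees partition the rest of the vertex set. -/
lemma IsBAE.children (h : IsBAE A s E a n) :
    ∃ c : ℕ → V,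
      (∀ i < n, (a, c i) ∈ E ∧ hgt s E (c i) = i) ∧
      (∀ b, (a, b) ∈ E → ∃ i, i < n ∧ b = c i) ∧
      (∀ i < n, ∀ j < n, i ≠ j → Disjoint (desc s E (c i)) (desc s E (c j))) ∧
      (∀ i < n, a ∉ desc s E (c i)) ∧
      s = insert a ((Finset.range n).biUnion (fun i => desc s E (c i))) := by
  induction h with
  | single a =>
    exact ⟨fun _ => a, fun i hi => absurd hi (Nat.not_lt_zero i), fun b hb => absurd hb
      (by simp), fun i hi => absurd hi (Nat.not_lt_zero i),
      fun i hi => absurd hi (Nat.not_lt_zero i), by simp⟩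
  | join h1 h2 hd hA ih1 ih2 =>
    rename_i s t E F a b i
    obtain ⟨c, hc1, hc2, hc3, hc4, hc5⟩ := ih1
    refine ⟨fun j => if j = i then b else c j, ?_, ?_, ?_, ?_, ?_⟩
    · intro j hj
      rcases Nat.lt_succ_iff_lt_or_eq.1 hj with hj | rfl
      · have hcj := hc1 j hj
        have hcjs : c j ∈ s := (h1.edge_mem _ hcj.1).2
        have hcja : c j ≠ a := fun hh => h1.no_incoming a (hh ▸ hcj.1)
        simp only [if_neg (Nat.ne_of_lt hj)]
        refine ⟨Finset.mem_insert_of_mem (Finset.mem_union_left _ hcj.1), ?_⟩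
        rw [hgt, desc_left h1 h2 hd hcjs hcja, ← hgt, hcj.2]
      · beta_reduce
        rw [if_pos rfl]
        refine ⟨Finset.mem_insert_self _ _, ?_⟩
        rw [hgt, desc_right h1 h2 hd h2.root_mem', ← hgt, h2.hgt_root]
    · intro b' hb'
      rcases Finset.mem_insert.1 hb' with he | he
      · rw [Prod.mk.injEq] at he
        exact ⟨i, Nat.lt_succ_self i, by beta_reduce; rw [he.2, if_pos rfl]⟩
      · rcases Finset.mem_union.1 he with he | he
        · obtain ⟨j, hj, rfl⟩ := hc2 _ he
          exact ⟨j, Nat.lt_succ_of_lt hj, by beta_reduce; rw [if_neg (Nat.ne_of_lt hj)]⟩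
        · exact absurd ((h2.edge_mem _ he).1) (Finset.disjoint_left.1 hd h1.root_mem')
    · intro j hj k hk hjk
      have key : ∀ m, m < i → desc (s ∪ t) (insert (a, b) (E ∪ F)) (c m) = desc s E (c m) := by
        intro m hm
        have hcm := hc1 m hm
        exact desc_left h1 h2 hd ((h1.edge_mem _ hcm.1).2)
          (fun hh => h1.no_incoming a (hh ▸ hcm.1))
      have keyb : desc (s ∪ t) (insert (a, b) (E ∪ F)) b = t := by
        rw [desc_right h1 h2 hd h2.root_mem', h2.desc_root]
      rcases Nat.lt_succ_iff_lt_or_eq.1 hj with hj' | rfl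
      · rcases Nat.lt_succ_iff_lt_or_eq.1 hk with hk' | rfl
        · beta_reduce
          rw [if_neg (Nat.ne_of_lt hj'), if_neg (Nat.ne_of_lt hk'), key j hj', key k hk']
          exact hc3 j hj' k hk' hjk
        · beta_reduce
          rw [if_neg (Nat.ne_of_lt hj'), if_pos rfl, key j hj', keyb]
          exact Finset.disjoint_of_subset_left (desc_subset.trans (le_refl s)) hd
      · rcases Nat.lt_succ_iff_lt_or_eq.1 hk with hk' | rfl
        · beta_reduce
          rw [if_pos rfl, if_neg (Nat.ne_of_lt hk'), keyb, key k hk']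
          exact (Finset.disjoint_of_subset_left (desc_subset.trans (le_refl s)) hd).symm
        · exact absurd rfl hjk
    · intro j hj
      rcases Nat.lt_succ_iff_lt_or_eq.1 hj with hj' | rfl
      · beta_reduce
        rw [if_neg (Nat.ne_of_lt hj'),
          desc_left h1 h2 hd ((h1.edge_mem _ (hc1 j hj').1).2)
            (fun hh => h1.no_incoming a (hh ▸ (hc1 j hj').1))]
        exact hc4 j hj'
      · beta_reduce
        rw [if_pos rfl, desc_right h1 h2 hd h2.root_mem', h2.desc_root]
        exact Finset.disjoint_left.1 hd h1.root_mem'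
    · have key : ∀ m, m < i → desc (s ∪ t) (insert (a, b) (E ∪ F)) (c m) = desc s E (c m) := by
        intro m hm
        have hcm := hc1 m hm
        exact desc_left h1 h2 hd ((h1.edge_mem _ hcm.1).2)
          (fun hh => h1.no_incoming a (hh ▸ hcm.1))
      have keyb : desc (s ∪ t) (insert (a, b) (E ∪ F)) b = t := by
        rw [desc_right h1 h2 hd h2.root_mem', h2.desc_root]
      rw [Finset.range_add_one, Finset.biUnion_insert]
      have hb1 : (fun j => if j = i then b else c j) i = b := if_pos rfl
      rw [hb1, keyb]
      have hrest : (Finset.range i).biUnion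
          (fun j => desc (s ∪ t) (insert (a, b) (E ∪ F)) (if j = i then b else c j)) =
          (Finset.range i).biUnion (fun j => desc s E (c j)) := by
        apply Finset.biUnion_congr rfl
        intro j hj
        rw [Finset.mem_range] at hj
        rw [if_neg (Nat.ne_of_lt hj), key j hj]
      rw [hrest]
      conv_lhs => rw [hc5]
      ext y
      simp only [Finset.mem_union, Finset.mem_insert]
      tauto

end Children
section Chain

variable {a : V} {c : ℕ → V}

/-- Repeatedly joining a tree of height `k` with trees of heights `k, k+1, …, m-1`
yields a tree of height `m`. -/
lemma joinChain (a : V) (T0 : Finset V) (E0 : Finset (V × V)) (c : ℕ → V)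
    (S : ℕ → Finset V) (F : ℕ → Finset (V × V)) (k : ℕ) :
    ∀ m, k ≤ m →
    (IsBAE (fun _ _ => True) T0 E0 a k) →
    (∀ i, k ≤ i → i < m → IsBAE (fun _ _ => True) (S i) (F i) (c i) i) →
    (∀ i, k ≤ i → i < m → Disjoint (T0 ∪ (Finset.Ico k i).biUnion S) (S i)) →
    IsBAE (fun _ _ => True) (T0 ∪ (Finset.Ico k m).biUnion S)
      (E0 ∪ (Finset.Ico k m).biUnion F ∪ (Finset.Ico k m).image (fun i => (a, c i))) a m := by
  intro m
  induction m with
  | zero =>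
    intro hk h0 _ _
    rw [Nat.le_zero] at hk
    subst hk
    simpa using h0
  | succ m ih =>
    intro hk h0 hT hdisj
    by_cases hkm1 : k = m + 1
    · subst hkm1; simpa using h0
    · have hkm : k ≤ m := by omega
      have prev := ih hkm h0 (fun i h1 h2 => hT i h1 (Nat.lt_succ_of_lt h2))
        (fun i h1 h2 => hdisj i h1 (Nat.lt_succ_of_lt h2))
      have hIco : Finset.Ico k (m + 1) = insert m (Finset.Ico k m) := by
        rw [Nat.Ico_succ_right_eq_insert_Ico hkm]
      have hjoin := IsBAE.join prev (hT m hkm (Nat.lt_succ_self m))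
        (hdisj m hkm (Nat.lt_succ_self m)) trivial
      have hv : T0 ∪ (Finset.Ico k (m+1)).biUnion S =
          (T0 ∪ (Finset.Ico k m).biUnion S) ∪ S m := by
        rw [hIco, Finset.biUnion_insert]
        ext y
        simp only [Finset.mem_union]
        tauto
      have he : E0 ∪ (Finset.Ico k (m+1)).biUnion F ∪
            (Finset.Ico k (m+1)).image (fun i => (a, c i)) =
          insert (a, c m) ((E0 ∪ (Finset.Ico k m).biUnion F ∪
            (Finset.Ico k m).image (fun i => (a, c i))) ∪ F m) := by
        rw [hIco, Finset.biUnion_insert, Finset.image_insert]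
        ext e
        simp only [Finset.mem_union, Finset.mem_insert]
        tauto
      rw [hv, he]
      exact hjoin

end Chain

/-- Exchange at the tree level. Let `H` be a binomial arborescence with `u` the parent of
both `v` and `w` and `α_H(w) < α_H(v)`; let `T_w` be the subtree rooted at `w` and
`T_0, …, T_ℓ` the subtrees rooted at the children of `v` of heights
`α_H(w), …, α_H(v) - 1`. Then (ignoring which player beats which, i.e. over the trivial
relation) the trees `T_w, T_0, …, T_ℓ` can be combined, by adding `ℓ + 1` arcs among
their roots, into a single binomial arborescence of height `α_H(v)`; and detaching
`T_0, …, T_ℓ` from `v` leaves `v` rooting a binomial arborescence of height `α_H(w)`. -/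
theorem tree_level_exchange (A : V → V → Prop) (s : Finset V) (E : Finset (V × V))
    (r : V) (n : ℕ) (h : IsBAE A s E r n)
    (u v w : V) (huv : (u, v) ∈ E) (huw : (u, w) ∈ E) (hne : w ≠ v)
    (hlt : hgt s E w < hgt s E v)
    -- `HD` is the union of the vertex sets of the subtrees `T_0, …, T_ℓ` rooted at the
    -- children of `v` of height at least `α_H(w)`:
    (HD : Finset V)
    (hHD : HD = cfilter
      (fun x => ∃ b : V, (v, b) ∈ E ∧ hgt s E w ≤ hgt s E b ∧ x ∈ desc s E b) s) :
    (∃ (Enew : Finset (V × V)) (ρ : V),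
      -- the new arcs are among the roots of `T_w, T_0, …, T_ℓ` …
      (∀ e ∈ Enew,
        (e.1 = w ∨ ((v, e.1) ∈ E ∧ hgt s E w ≤ hgt s E e.1)) ∧
        (e.2 = w ∨ ((v, e.2) ∈ E ∧ hgt s E w ≤ hgt s E e.2))) ∧
      -- … there are `ℓ + 1 = α_H(v) - α_H(w)` of them …
      Enew.card = hgt s E v - hgt s E w ∧
      -- … and together with the old arcs inside the trees they form a binomial
      -- arborescence of height `α_H(v)` on the union of the trees:
      IsBAE (fun _ _ => True) (desc s E w ∪ HD)
        ((cfilter (fun e => e.1 ∈ desc s E w ∪ HD ∧ e.2 ∈ desc s E w ∪ HD) E) ∪ Enew)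
        ρ (hgt s E v)) ∧
    -- detaching `T_0, …, T_ℓ` leaves `v` rooting a binomial arborescence of height `α_H(w)`:
    IsBAE (fun _ _ => True) (desc s E v \ HD)
      (cfilter (fun e => e.1 ∈ desc s E v \ HD ∧ e.2 ∈ desc s E v \ HD) E)
      v (hgt s E w) := by
  have hE2 : ∀ e ∈ E, e.2 ∈ s := fun e he => (h.edge_mem e he).2
  have hv_mem : v ∈ s := (h.edge_mem _ huv).2
  have hw_mem : w ∈ s := (h.edge_mem _ huw).2
  have hu_mem : u ∈ s := (h.edge_mem _ huv).1
  set hv := hgt s E v with hhv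
  set hw := hgt s E w with hhw
  -- children of `v`
  have hTv := h.subtree v hv_mem
  obtain ⟨c, hc1, hc2, hc3, hc4, hc5⟩ := hTv.children
  have hcmem : ∀ i < hv, c i ∈ desc s E v := fun i hi => (mem_subArcs.1 (hc1 i hi).1).2.2
  have harc : ∀ i < hv, (v, c i) ∈ E := fun i hi => (mem_subArcs.1 (hc1 i hi).1).1
  have hdesc_eq : ∀ i < hv, desc (desc s E v) (subArcs s E v) (c i) = desc s E (c i) :=
    fun i hi => desc_sub hE2 (hcmem i hi)
  have hhgt : ∀ i < hv, hgt s E (c i) = i := fun i hi => by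
    rw [← hgt_sub hE2 (hcmem i hi)]; exact (hc1 i hi).2
  have hdisj : ∀ i < hv, ∀ j < hv, i ≠ j → Disjoint (desc s E (c i)) (desc s E (c j)) :=
    fun i hi j hj hij => by rw [← hdesc_eq i hi, ← hdesc_eq j hj]; exact hc3 i hi j hj hij
  have hvnot : ∀ i < hv, v ∉ desc s E (c i) := fun i hi => by
    rw [← hdesc_eq i hi]; exact hc4 i hi
  have hpart : desc s E v = insert v ((Finset.range hv).biUnion (fun i => desc s E (c i))) := by
    rw [hc5]
    congr 1
    exact Finset.biUnion_congr rfl (fun i hi => hdesc_eq i (Finset.mem_range.1 hi))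
  have hchild : ∀ b, (v, b) ∈ E → ∃ i, i < hv ∧ b = c i := fun b hb =>
    hc2 b (mem_subArcs.2 ⟨hb, self_mem_desc hv_mem, desc_closed hE2 (self_mem_desc hv_mem) hb⟩)
  -- subtrees at `v` and `w` are disjoint (both are children of `u`)
  have hvdu : v ∈ desc s E u := desc_closed hE2 (self_mem_desc hu_mem) huv
  have hwdu : w ∈ desc s E u := desc_closed hE2 (self_mem_desc hu_mem) huw
  have hTu := h.subtree u hu_mem
  obtain ⟨d, hd1, hd2, hd3, hd4, hd5⟩ := hTu.children
  obtain ⟨iv, hiv, hveq⟩ := hd2 v (mem_subArcs.2 ⟨huv, self_mem_desc hu_mem, hvdu⟩)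
  obtain ⟨iw, hiw, hweq⟩ := hd2 w (mem_subArcs.2 ⟨huw, self_mem_desc hu_mem, hwdu⟩)
  have hDJ : Disjoint (desc s E v) (desc s E w) := by
    have hdd := hd3 iv hiv iw hiw (fun hh => hne (by rw [hweq, hveq, hh]))
    rw [← hveq, ← hweq, desc_sub hE2 hvdu, desc_sub hE2 hwdu] at hdd
    exact hdd
  -- identification of HD
  have hHDeq : HD = (Finset.Ico hw hv).biUnion (fun i => desc s E (c i)) := by
    rw [hHD]
    ext x
    simp only [mem_cfilter, Finset.mem_biUnion, Finset.mem_Ico]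
    constructor
    · rintro ⟨hxs, b, hb, hhb, hxb⟩
      obtain ⟨i, hi, rfl⟩ := hchild b hb
      exact ⟨i, ⟨(hhgt i hi) ▸ hhb, hi⟩, hxb⟩
    · rintro ⟨i, ⟨hi1, hi2⟩, hx⟩
      exact ⟨desc_subset (desc_trans (hcmem i hi2) hx),
        c i, harc i hi2, (hhgt i hi2).symm ▸ hi1, hx⟩
  -- the subtree at each child is a BAE of the right height
  have hTi : ∀ i, i < hv →
      IsBAE (fun _ _ => True) (desc s E (c i)) (subArcs s E (c i)) (c i) i := by
    intro i hi
    have := h.subtree (c i) (desc_subset (hcmem i hi))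
    rwa [hhgt i hi] at this
  have hwle : hw ≤ hv := le_of_lt hlt
  constructor
  · -- first conclusion
    refine ⟨(Finset.Ico hw hv).image (fun i => (w, c i)), w, ?_, ?_, ?_⟩
    · rintro e he
      obtain ⟨i, hi, rfl⟩ := Finset.mem_image.1 he
      rw [Finset.mem_Ico] at hi
      exact ⟨Or.inl rfl, Or.inr ⟨harc i hi.2, (hhgt i hi.2).symm ▸ hi.1⟩⟩
    · rw [Finset.card_image_of_injOn, Nat.card_Ico]
      intro i hi j hj hij
      rw [Finset.mem_coe, Finset.mem_Ico] at hi hj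
      have : c i = c j := congrArg Prod.snd hij
      rw [← hhgt i hi.2, ← hhgt j hj.2, this]
    · have hchain := joinChain w (desc s E w) (subArcs s E w) c
        (fun i => desc s E (c i)) (fun i => subArcs s E (c i)) hw hv hwle
        (h.subtree w hw_mem) (fun i _ hi => hTi i hi) ?_
      · have hvset : desc s E w ∪ HD =
            desc s E w ∪ (Finset.Ico hw hv).biUnion (fun i => desc s E (c i)) := by
          rw [hHDeq]
        have harcs : cfilter (fun e => e.1 ∈ desc s E w ∪ HD ∧ e.2 ∈ desc s E w ∪ HD) E =
            subArcs s E w ∪ (Finset.Ico hw hv).biUnion (fun i => subArcs s E (c i)) := by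
          ext e
          rw [mem_cfilter, hHDeq]
          simp only [Finset.mem_union, Finset.mem_biUnion, Finset.mem_Ico, mem_subArcs]
          constructor
          · rintro ⟨he, h1 | ⟨i, hi, h1⟩, h2⟩
            · exact Or.inl ⟨he, h1, desc_closed hE2 h1 he⟩
            · exact Or.inr ⟨i, hi, he, h1, desc_closed hE2 h1 he⟩
          · rintro (⟨he, h1, h2⟩ | ⟨i, hi, he, h1, h2⟩)
            · exact ⟨he, Or.inl h1, Or.inl h2⟩
            · exact ⟨he, Or.inr ⟨i, hi, h1⟩, Or.inr ⟨i, hi, h2⟩⟩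
        rw [harcs, hvset]
        exact hchain
      · -- disjointness for the chain
        intro i hi1 hi2
        rw [Finset.disjoint_left]
        intro x hx
        rcases Finset.mem_union.1 hx with hx | hx
        · intro hx'
          exact Finset.disjoint_right.1 hDJ hx (desc_trans (hcmem i hi2) hx')
        · obtain ⟨j, hj, hxj⟩ := Finset.mem_biUnion.1 hx
          rw [Finset.mem_Ico] at hj
          exact Finset.disjoint_left.1
            (hdisj j (lt_trans hj.2 hi2) i hi2 (Nat.ne_of_lt hj.2)) hxj
  · -- second conclusion
    have hchain := joinChain v {v} ∅ c
      (fun i => desc s E (c i)) (fun i => subArcs s E (c i)) 0 hw (Nat.zero_le _)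
      (IsBAE.single v) (fun i _ hi => hTi i (lt_of_lt_of_le hi hwle)) ?_
    · have hvset : desc s E v \ HD =
          {v} ∪ (Finset.Ico 0 hw).biUnion (fun i => desc s E (c i)) := by
        ext x
        rw [Finset.mem_sdiff, hpart, hHDeq]
        simp only [Finset.mem_insert, Finset.mem_biUnion, Finset.mem_range, Finset.mem_union,
          Finset.mem_singleton, Finset.mem_Ico]
        constructor
        · rintro ⟨hx1 | ⟨i, hi, hx1⟩, hx2⟩
          · exact Or.inl hx1
          · refine Or.inr ⟨i, ⟨Nat.zero_le _, ?_⟩, hx1⟩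
            by_contra hcon
            exact hx2 ⟨i, ⟨Nat.le_of_not_lt hcon, hi⟩, hx1⟩
        · rintro (rfl | ⟨i, ⟨_, hi⟩, hx1⟩)
          · refine ⟨Or.inl rfl, ?_⟩
            rintro ⟨j, ⟨hj1, hj2⟩, hxj⟩
            exact hvnot j hj2 hxj
          · refine ⟨Or.inr ⟨i, lt_of_lt_of_le hi hwle, hx1⟩, ?_⟩
            rintro ⟨j, ⟨hj1, hj2⟩, hxj⟩
            exact Finset.disjoint_left.1
              (hdisj i (lt_of_lt_of_le hi hwle) j hj2
                (fun hh => absurd (hh ▸ hi) (Nat.not_lt_of_le hj1))) hx1 hxj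
      have harcs : cfilter (fun e => e.1 ∈ desc s E v \ HD ∧ e.2 ∈ desc s E v \ HD) E =
          ∅ ∪ (Finset.Ico 0 hw).biUnion (fun i => subArcs s E (c i)) ∪
            (Finset.Ico 0 hw).image (fun i => (v, c i)) := by
        ext e
        rw [mem_cfilter, hvset]
        simp only [Finset.mem_union, Finset.mem_biUnion, Finset.mem_Ico, mem_subArcs,
          Finset.mem_singleton, Finset.mem_image, Finset.notMem_empty, false_or]
        constructor
        · rintro ⟨he, h1 | ⟨i, hi, h1⟩, h2⟩
          · -- arc leaving `v`
            have he' : (v, e.2) ∈ E := by rw [← h1, Prod.mk.eta]; exact he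
            obtain ⟨i, hi, hq⟩ := hchild _ he'
            rcases h2 with h2 | ⟨j, hj, h2⟩
            · -- `e.2 = v` is impossible
              exfalso
              have hm : c i ∈ desc s E (c i) :=
                self_mem_desc (desc_subset (hcmem i hi))
              have hvn := hvnot i hi
              rw [← h2, hq] at hvn
              exact hvn hm
            · have hij : i = j := by
                by_contra hij
                have hm : c i ∈ desc s E (c i) :=
                  self_mem_desc (desc_subset (hcmem i hi))
                rw [← hq] at hm
                exact Finset.disjoint_left.1
                  (hdisj i hi j (lt_of_lt_of_le hj.2 hwle) hij) (hq ▸ hm) h2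
              refine Or.inr ⟨i, ⟨Nat.zero_le _, hij ▸ hj.2⟩, ?_⟩
              rw [← h1, ← hq, Prod.mk.eta]
          · exact Or.inl ⟨i, hi, he, h1, desc_closed hE2 h1 he⟩
        · rintro (⟨i, hi, he, h1, h2⟩ | ⟨i, hi, rfl⟩)
          · exact ⟨he, Or.inr ⟨i, hi, h1⟩, Or.inr ⟨i, hi, h2⟩⟩
          · exact ⟨harc i (lt_of_lt_of_le hi.2 hwle), Or.inl rfl,
              Or.inr ⟨i, hi, self_mem_desc (desc_subset (hcmem i (lt_of_lt_of_le hi.2 hwle)))⟩⟩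
      rw [harcs, hvset]
      exact hchain
    · intro i hi1 hi2
      rw [Finset.disjoint_left]
      intro x hx
      rcases Finset.mem_union.1 hx with hx | hx
      · rw [Finset.mem_singleton] at hx
        subst hx
        exact hvnot i (lt_of_lt_of_le hi2 hwle)
      · obtain ⟨j, hj, hxj⟩ := Finset.mem_biUnion.1 hx
        rw [Finset.mem_Ico] at hj
        exact Finset.disjoint_left.1
          (hdisj j (lt_of_lt_of_le (lt_trans hj.2 hi2) hwle)
            i (lt_of_lt_of_le hi2 hwle) (Nat.ne_of_lt hj.2)) hxj
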